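/- arXiv:2110.02569 — 3 statements merged into one kernel-verified Lean document; each statement's English description precedes it below -/
import Mathlib

section
/- The function Ω(t) = (−θ)^{−q/(q−1)} ∏_{i≥1} (1 − t/θ^{q^i}) is a unit in the Tate algebra T and satisfies the functional equation Ω^{(−1)} = (t − θ)Ω, where Ω^{(−1)} denotes the (−1)-st Frobenius twist applied to the coefficients. -/
open PowerSeries Filter Finset

private lemma aux_coeff_mul_bound {F : Type*} [NontriviallyNormedField F] [IsUltrametricDist F]
    (f g : PowerSeries F) (Cf Cg B : ℝ) (hCf : 0 ≤ Cf) (hCg : 0 ≤ Cg) (hB : 0 ≤ B)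
    (hf : ∀ n, ‖coeff n f‖ ≤ Cf * B ^ n) (hg : ∀ n, ‖coeff n g‖ ≤ Cg * B ^ n) (n : ℕ) :
    ‖coeff n (f * g)‖ ≤ Cf * Cg * B ^ n := by
  rw [coeff_mul]
  refine IsUltrametricDist.norm_sum_le_of_forall_le_of_nonneg (by positivity) ?_
  rintro ⟨i, j⟩ hij
  simp only [Finset.HasAntidiagonal.mem_antidiagonal] at hij
  calc ‖coeff i f * coeff j g‖ ≤ (Cf * B ^ i) * (Cg * B ^ j) := by
        rw [norm_mul]
        exact mul_le_mul (hf i) (hg j) (norm_nonneg _) (by positivity)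
    _ = Cf * Cg * B ^ n := by rw [← hij, pow_add]; ring

private lemma aux_geom_inv {F : Type*} [Field F] (u : F) :
    (1 - PowerSeries.C u * PowerSeries.X) * PowerSeries.mk (fun n => u ^ n) = 1 := by
  ext n
  cases n with
  | zero => simp
  | succ n =>
      rw [sub_mul, one_mul, map_sub, mul_assoc, PowerSeries.coeff_C_mul,
        PowerSeries.coeff_succ_X_mul, PowerSeries.coeff_mk, PowerSeries.coeff_mk,
        ← pow_succ']
      simp

private lemma aux_Icc_range {M : Type*} [CommMonoid M] (f : ℕ → M) (N : ℕ) :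
    ∏ i ∈ Finset.Icc 1 N, f i = ∏ i ∈ Finset.range N, f (i + 1) := by
  induction N with
  | zero => simp
  | succ N ih => rw [Finset.prod_Icc_succ_top (by omega), ih, Finset.prod_range_succ]

private lemma aux_pow_tendsto {q : ℕ} (hq : 0 < q) (s : ℕ → ℝ) (hs : ∀ n, 0 ≤ s n)
    (h : Tendsto (fun n => s n ^ q) atTop (nhds 0)) : Tendsto s atTop (nhds 0) := by
  have hcont := (Real.continuousAt_rpow_const 0 ((q : ℝ)⁻¹) (Or.inr (by positivity))).tendsto
  have h2 : Tendsto (fun n => (s n ^ q) ^ ((q : ℝ)⁻¹)) atTop (nhds (0 ^ ((q : ℝ)⁻¹) : ℝ)) :=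
    hcont.comp h
  have hq0 : (q : ℝ) ≠ 0 := by positivity
  have he : ∀ n, (s n ^ q) ^ ((q : ℝ)⁻¹) = s n := by
    intro n
    rw [← Real.rpow_natCast (s n) q, ← Real.rpow_mul (hs n), mul_inv_cancel₀ hq0,
      Real.rpow_one]
  simpa [he, Real.zero_rpow (inv_ne_zero hq0)] using h2

/-- The Anderson–Thakur function
`Ω(t) = (−θ)^{−q/(q−1)} ∏_{i≥1} (1 − t/θ^{qⁱ})`
is a unit in the Tate algebra `T` (power series with coefficient norms tending to `0`)
and satisfies `Ω^{(−1)} = (t − θ) Ω`, where `Ω^{(−1)}` is the inverse Frobenius twist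
on coefficients.  Here `F` is a complete non-archimedean valued field with `q`-power
Frobenius automorphism `φ`, `‖θ‖ > 1`, and `η = (−θ)^{1/(q−1)}` is a fixed
`(q−1)`-st root of `−θ` (so that `(−θ)^{−q/(q−1)} = ((−θ)·η)⁻¹`).  The last clause
states that the partial products of the defining infinite product converge,
coefficientwise, to `Ω`. -/
theorem stmt3 {F : Type*} [NontriviallyNormedField F] [CompleteSpace F]
    [IsUltrametricDist F]
    (q : ℕ) (hq : 1 < q) (φ : F ≃+* F) (hφ : ∀ x : F, φ x = x ^ q)
    (θ : F) (hθ : 1 < ‖θ‖) (η : F) (hη : η ^ (q - 1) = -θ) :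
    ∃ Ω : PowerSeries F,
      Filter.Tendsto (fun n => ‖PowerSeries.coeff n Ω‖) Filter.atTop (nhds 0) ∧
      (∃ Ωinv : PowerSeries F,
          Filter.Tendsto (fun n => ‖PowerSeries.coeff n Ωinv‖) Filter.atTop (nhds 0) ∧
          Ω * Ωinv = 1) ∧
      PowerSeries.map (φ.symm : F →+* F) Ω =
        (PowerSeries.X - PowerSeries.C θ) * Ω ∧
      (∀ n : ℕ,
        Filter.Tendsto
          (fun N : ℕ => PowerSeries.coeff n
            (PowerSeries.C (((-θ) * η)⁻¹) *
              ∏ i ∈ Finset.Icc 1 N,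
                (1 - PowerSeries.C (θ ^ q ^ i)⁻¹ * PowerSeries.X)))
          Filter.atTop (nhds (PowerSeries.coeff n Ω))) := by
  classical
  have hq0 : 0 < q := by omega
  have hθ0 : θ ≠ 0 := by
    intro h
    rw [h, norm_zero] at hθ; linarith
  have hη0 : η ≠ 0 := by
    intro h
    have h2 : (-θ : F) = 0 := by
      rw [← hη, h, zero_pow (by omega : q - 1 ≠ 0)]
    exact hθ0 (by simpa [neg_eq_zero] using h2)
  set r : ℝ := ‖θ‖⁻¹ with hrdef
  have hr0 : 0 ≤ r := by positivity
  have hr1 : r < 1 := inv_lt_one_of_one_lt₀ hθ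
  have hrle1 : r ≤ 1 := hr1.le
  set c : F := ((-θ) * η)⁻¹ with hcdef
  have hc0 : c ≠ 0 := inv_ne_zero (mul_ne_zero (neg_ne_zero.mpr hθ0) hη0)
  set u : ℕ → F := fun i => (θ ^ q ^ i)⁻¹ with hudef
  have hunorm : ∀ i, ‖u i‖ = r ^ q ^ i := by
    intro i
    simp only [hudef, norm_inv, norm_pow, hrdef, inv_pow]
  have hule : ∀ i, ‖u i‖ ≤ r := by
    intro i
    rw [hunorm]
    calc r ^ q ^ i ≤ r ^ 1 := pow_le_pow_of_le_one hr0 hrle1 (Nat.one_le_pow _ _ hq0)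
      _ = r := pow_one r
  have huleN : ∀ N : ℕ, ‖u (N + 1)‖ ≤ r ^ N := by
    intro N
    rw [hunorm]
    exact pow_le_pow_of_le_one hr0 hrle1
      ((Nat.le_succ N).trans (Nat.lt_pow_self (n := N + 1) hq).le)
  set P : ℕ → PowerSeries F := fun N =>
    PowerSeries.C c * ∏ i ∈ Finset.Icc 1 N,
      (1 - PowerSeries.C (u i) * PowerSeries.X) with hPdef
  set Q : ℕ → PowerSeries F := fun N =>
    PowerSeries.C c⁻¹ * ∏ i ∈ Finset.Icc 1 N,
      PowerSeries.mk (fun n => u i ^ n) with hQdef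
  -- coefficient bounds
  have hfac : ∀ (i n : ℕ), ‖coeff n (1 - PowerSeries.C (u i) * X)‖ ≤ 1 * r ^ n := by
    intro i n
    match n with
    | 0 => simp
    | 1 =>
        have h1 : coeff 1 (1 - PowerSeries.C (u i) * X) = -(u i) := by
          simp [PowerSeries.coeff_one, PowerSeries.coeff_C_mul, PowerSeries.coeff_X]
        rw [h1, norm_neg, one_mul, pow_one]
        exact hule i
    | (m + 2) =>
        have h1 : coeff (m + 2) (1 - PowerSeries.C (u i) * X) = 0 := by
          simp [PowerSeries.coeff_one, PowerSeries.coeff_C_mul, PowerSeries.coeff_X]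
        rw [h1, norm_zero]
        positivity
  have hprod : ∀ (s : Finset ℕ) (n : ℕ),
      ‖coeff n (∏ i ∈ s, (1 - PowerSeries.C (u i) * X))‖ ≤ 1 * r ^ n := by
    intro s
    induction s using Finset.induction_on with
    | empty =>
        intro n
        cases n with
        | zero => simp
        | succ m =>
            rw [Finset.prod_empty]
            have : coeff (m + 1) (1 : PowerSeries F) = 0 := by
              simp [PowerSeries.coeff_one]
            rw [this, norm_zero]
            positivity
    | @insert a s ha ih =>
        intro n
        rw [Finset.prod_insert ha]
        have := aux_coeff_mul_bound _ _ 1 1 r zero_le_one zero_le_one hr0 (hfac a) ih n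
        simpa using this
  have hgfac : ∀ (i n : ℕ), ‖coeff n (PowerSeries.mk fun k => u i ^ k)‖ ≤ 1 * r ^ n := by
    intro i n
    rw [PowerSeries.coeff_mk, one_mul, norm_pow]
    exact pow_le_pow_left₀ (norm_nonneg _) (hule i) n
  have hqprod : ∀ (s : Finset ℕ) (n : ℕ),
      ‖coeff n (∏ i ∈ s, PowerSeries.mk (fun k => u i ^ k))‖ ≤ 1 * r ^ n := by
    intro s
    induction s using Finset.induction_on with
    | empty =>
        intro n
        cases n with
        | zero => simp
        | succ m =>
            rw [Finset.prod_empty]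
            have : coeff (m + 1) (1 : PowerSeries F) = 0 := by
              simp [PowerSeries.coeff_one]
            rw [this, norm_zero]
            positivity
    | @insert a s ha ih =>
        intro n
        rw [Finset.prod_insert ha]
        have := aux_coeff_mul_bound _ _ 1 1 r zero_le_one zero_le_one hr0 (hgfac a) ih n
        simpa using this
  have hPb : ∀ (N n : ℕ), ‖coeff n (P N)‖ ≤ ‖c‖ * r ^ n := by
    intro N n
    simp only [hPdef]
    rw [PowerSeries.coeff_C_mul, norm_mul]
    calc ‖c‖ * ‖coeff n (∏ i ∈ Finset.Icc 1 N, (1 - PowerSeries.C (u i) * X))‖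
        ≤ ‖c‖ * (1 * r ^ n) := mul_le_mul_of_nonneg_left (hprod _ n) (norm_nonneg c)
      _ = ‖c‖ * r ^ n := by ring
  have hQb : ∀ (N n : ℕ), ‖coeff n (Q N)‖ ≤ ‖c⁻¹‖ * r ^ n := by
    intro N n
    simp only [hQdef]
    rw [PowerSeries.coeff_C_mul, norm_mul]
    calc ‖c⁻¹‖ * ‖coeff n (∏ i ∈ Finset.Icc 1 N, PowerSeries.mk (fun k => u i ^ k))‖
        ≤ ‖c⁻¹‖ * (1 * r ^ n) := mul_le_mul_of_nonneg_left (hqprod _ n) (norm_nonneg _)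
      _ = ‖c⁻¹‖ * r ^ n := by ring
  -- recurrences
  have hPrec : ∀ N, P (N + 1) = P N * (1 - PowerSeries.C (u (N + 1)) * X) := by
    intro N
    simp only [hPdef]
    rw [Finset.prod_Icc_succ_top (by omega : 1 ≤ N + 1), mul_assoc]
  have hQrec : ∀ N, Q (N + 1) = Q N * PowerSeries.mk (fun k => u (N + 1) ^ k) := by
    intro N
    simp only [hQdef]
    rw [Finset.prod_Icc_succ_top (by omega : 1 ≤ N + 1), mul_assoc]
  -- coefficientwise Cauchy/limits for P
  have hXP : ∀ (f : PowerSeries F) (Cb : ℝ) (_ : 0 ≤ Cb)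
      (_ : ∀ n, ‖coeff n f‖ ≤ Cb * r ^ n) (n : ℕ), ‖coeff n (X * f)‖ ≤ Cb := by
    intro f Cb hCb hf n
    cases n with
    | zero => rw [PowerSeries.coeff_zero_X_mul, norm_zero]; exact hCb
    | succ m =>
        rw [PowerSeries.coeff_succ_X_mul]
        calc ‖coeff m f‖ ≤ Cb * r ^ m := hf m
          _ ≤ Cb * 1 := mul_le_mul_of_nonneg_left (pow_le_one₀ hr0 hrle1) hCb
          _ = Cb := mul_one Cb
  have hPconv : ∀ n, ∃ L, Tendsto (fun N => coeff n (P N)) atTop (nhds L) := by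
    intro n
    refine cauchySeq_tendsto_of_complete (cauchySeq_of_le_geometric r ‖c‖ hr1 ?_)
    intro N
    rw [dist_eq_norm]
    have hdiff : coeff n (P N) - coeff n (P (N + 1))
        = u (N + 1) * coeff n (X * P N) := by
      rw [← map_sub, hPrec N, ← PowerSeries.coeff_C_mul]
      congr 1
      ring
    rw [hdiff, norm_mul]
    calc ‖u (N + 1)‖ * ‖coeff n (X * P N)‖ ≤ r ^ N * ‖c‖ :=
          mul_le_mul (huleN N) (hXP (P N) ‖c‖ (norm_nonneg c) (hPb N) n)
            (norm_nonneg _) (by positivity)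
      _ = ‖c‖ * r ^ N := by ring
  -- Q: we use the identity mk (v^k) = 1 + C v * (X * mk (v^k))
  have hgsplit : ∀ v : F, PowerSeries.mk (fun k => v ^ k)
      = 1 + PowerSeries.C v * (X * PowerSeries.mk (fun k => v ^ k)) := by
    intro v
    ext n
    cases n with
    | zero => simp
    | succ m =>
        rw [map_add, PowerSeries.coeff_C_mul, PowerSeries.coeff_succ_X_mul,
          PowerSeries.coeff_mk, PowerSeries.coeff_mk, ← pow_succ']
        simp [PowerSeries.coeff_one]
  have hQconv : ∀ n, ∃ L, Tendsto (fun N => coeff n (Q N)) atTop (nhds L) := by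
    intro n
    refine cauchySeq_tendsto_of_complete (cauchySeq_of_le_geometric r ‖c⁻¹‖ hr1 ?_)
    intro N
    rw [dist_eq_norm]
    have hdiff : coeff n (Q N) - coeff n (Q (N + 1))
        = -(u (N + 1) * coeff n (X * Q (N + 1))) := by
      rw [← PowerSeries.coeff_C_mul, ← map_neg, ← map_sub]
      congr 1
      calc Q N - Q (N + 1)
          = Q N - Q N * (1 + PowerSeries.C (u (N + 1))
              * (X * PowerSeries.mk (fun k => u (N + 1) ^ k))) := by
            rw [← hgsplit, ← hQrec]
        _ = -(PowerSeries.C (u (N + 1)) * (X * (Q N * PowerSeries.mk (fun k => u (N+1) ^ k)))) := by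
            ring
        _ = -(PowerSeries.C (u (N + 1)) * (X * Q (N + 1))) := by rw [← hQrec]
    rw [hdiff, norm_neg, norm_mul]
    calc ‖u (N + 1)‖ * ‖coeff n (X * Q (N + 1))‖ ≤ r ^ N * ‖c⁻¹‖ :=
          mul_le_mul (huleN N) (hXP (Q (N + 1)) ‖c⁻¹‖ (norm_nonneg _) (hQb (N + 1)) n)
            (norm_nonneg _) (by positivity)
      _ = ‖c⁻¹‖ * r ^ N := by ring
  choose ω hω using hPconv
  choose b hb using hQconv
  have hωb : ∀ n, ‖ω n‖ ≤ ‖c‖ * r ^ n := fun n =>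
    le_of_tendsto (hω n).norm (Filter.Eventually.of_forall fun N => hPb N n)
  have hbb : ∀ n, ‖b n‖ ≤ ‖c⁻¹‖ * r ^ n := fun n =>
    le_of_tendsto (hb n).norm (Filter.Eventually.of_forall fun N => hQb N n)
  have hrpow : Tendsto (fun n : ℕ => r ^ n) atTop (nhds 0) :=
    tendsto_pow_atTop_nhds_zero_of_lt_one hr0 hr1
  refine ⟨PowerSeries.mk ω, ?_, ⟨PowerSeries.mk b, ?_, ?_⟩, ?_, ?_⟩
  · simp only [PowerSeries.coeff_mk]
    apply squeeze_zero (fun n => norm_nonneg _) hωb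
    simpa using hrpow.const_mul ‖c‖
  · simp only [PowerSeries.coeff_mk]
    apply squeeze_zero (fun n => norm_nonneg _) hbb
    simpa using hrpow.const_mul ‖c⁻¹‖
  · -- Ω * Ωinv = 1
    have hPQ : ∀ N, P N * Q N = 1 := by
      intro N
      simp only [hPdef, hQdef]
      calc PowerSeries.C c * (∏ i ∈ Finset.Icc 1 N, (1 - PowerSeries.C (u i) * X)) *
            (PowerSeries.C c⁻¹ * ∏ i ∈ Finset.Icc 1 N, PowerSeries.mk (fun n => u i ^ n))
          = (PowerSeries.C c * PowerSeries.C c⁻¹) *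
            ((∏ i ∈ Finset.Icc 1 N, (1 - PowerSeries.C (u i) * X)) *
             ∏ i ∈ Finset.Icc 1 N, PowerSeries.mk (fun n => u i ^ n)) := by ring
        _ = 1 := by
            rw [← map_mul, mul_inv_cancel₀ hc0, map_one, one_mul,
              ← Finset.prod_mul_distrib]
            rw [Finset.prod_congr rfl (fun i _ => aux_geom_inv (u i))]
            exact Finset.prod_const_one
    ext n
    have h1 : Tendsto (fun N => coeff n (P N * Q N)) atTop
        (nhds (coeff n (PowerSeries.mk ω * PowerSeries.mk b))) := by
      simp only [PowerSeries.coeff_mul, PowerSeries.coeff_mk]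
      exact tendsto_finset_sum _ fun p _ => (hω p.1).mul (hb p.2)
    have h2 : Tendsto (fun N => coeff n (P N * Q N)) atTop
        (nhds (coeff n (1 : PowerSeries F))) := by
      simp only [hPQ]
      exact tendsto_const_nhds
    exact tendsto_nhds_unique h1 h2
  · -- functional equation
    have hq1 : q - 1 + 1 = q := by omega
    have hφu : ∀ i, φ.symm (u (i + 1)) = u i := by
      intro i
      have h1 : φ (u i) = u (i + 1) := by
        rw [hφ]
        simp only [hudef]
        rw [← inv_pow, ← pow_mul, ← pow_succ]
        exact inv_pow θ _
      rw [← h1, RingEquiv.symm_apply_apply]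
    have hφc : φ.symm c = η⁻¹ := by
      have h1 : φ η⁻¹ = c := by
        rw [hφ, inv_pow, hcdef]
        congr 1
        rw [← hq1, pow_succ, hη]
      rw [← h1, RingEquiv.symm_apply_apply]
    have hmapfac : ∀ i, PowerSeries.map (φ.symm : F →+* F)
        (1 - PowerSeries.C (u (i + 1)) * X) = 1 - PowerSeries.C (u i) * X := by
      intro i
      rw [map_sub, map_one, map_mul, PowerSeries.map_C, PowerSeries.map_X]
      simp [hφu i]
    have hu0 : u 0 = θ⁻¹ := by simp [hudef]
    have hfield : (-θ) * c = η⁻¹ := by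
      rw [hcdef, mul_inv, ← mul_assoc, mul_inv_cancel₀ (neg_ne_zero.mpr hθ0), one_mul]
    have hXC : (X : PowerSeries F) - PowerSeries.C θ
        = PowerSeries.C (-θ) * (1 - PowerSeries.C θ⁻¹ * X) := by
      rw [mul_sub, mul_one, ← mul_assoc, ← map_mul]
      have h2 : (-θ) * θ⁻¹ = -1 := by field_simp
      rw [h2, map_neg, map_neg, map_one, neg_one_mul, sub_neg_eq_add]
      ring
    have hkey : PowerSeries.C η⁻¹ * (1 - PowerSeries.C θ⁻¹ * X)
        = ((X : PowerSeries F) - PowerSeries.C θ) * PowerSeries.C c := by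
      rw [hXC, show PowerSeries.C (-θ) * (1 - PowerSeries.C θ⁻¹ * X) * PowerSeries.C c
        = PowerSeries.C ((-θ) * c) * (1 - PowerSeries.C θ⁻¹ * X) from by
          rw [map_mul]; ring, hfield]
    have hmapP : ∀ N, PowerSeries.map (φ.symm : F →+* F) (P (N + 1))
        = ((X : PowerSeries F) - PowerSeries.C θ) * P N := by
      intro N
      simp only [hPdef]
      rw [map_mul, PowerSeries.map_C]
      rw [show (φ.symm : F →+* F) c = φ.symm c from rfl, hφc]
      rw [aux_Icc_range (fun i => 1 - PowerSeries.C (u i) * X) (N + 1)]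
      rw [map_prod]
      simp only [hmapfac]
      rw [Finset.prod_range_succ', hu0,
        ← aux_Icc_range (fun i => 1 - PowerSeries.C (u i) * X) N]
      calc PowerSeries.C η⁻¹ *
            ((∏ i ∈ Finset.Icc 1 N, (1 - PowerSeries.C (u i) * X)) *
              (1 - PowerSeries.C θ⁻¹ * X))
          = (PowerSeries.C η⁻¹ * (1 - PowerSeries.C θ⁻¹ * X)) *
              ∏ i ∈ Finset.Icc 1 N, (1 - PowerSeries.C (u i) * X) := by ring
        _ = ((X : PowerSeries F) - PowerSeries.C θ) *
              (PowerSeries.C c * ∏ i ∈ Finset.Icc 1 N, (1 - PowerSeries.C (u i) * X)) := by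
            rw [hkey]; ring
    have hXcoeff : ∀ (f : PowerSeries F) (n : ℕ),
        coeff n (((X : PowerSeries F) - PowerSeries.C θ) * f)
          = (if n = 0 then 0 else coeff (n - 1) f) - θ * coeff n f := by
      intro f n
      rw [sub_mul, map_sub, PowerSeries.coeff_C_mul]
      congr 1
      cases n with
      | zero => simp [PowerSeries.coeff_zero_X_mul]
      | succ m => simp [PowerSeries.coeff_succ_X_mul]
    have hfe : ∀ n, φ.symm (ω n) = (if n = 0 then 0 else ω (n - 1)) - θ * ω n := by
      intro n
      have hx : Tendsto (fun N => coeff n (P (N + 1))) atTop (nhds (ω n)) :=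
        (hω n).comp (tendsto_add_atTop_nat 1)
      have hL : Tendsto (fun N => φ.symm (coeff n (P (N + 1)))) atTop
          (nhds (φ.symm (ω n))) := by
        rw [tendsto_iff_norm_sub_tendsto_zero] at hx ⊢
        apply aux_pow_tendsto hq0 _ (fun N => norm_nonneg _)
        have heq : ∀ N, ‖φ.symm (coeff n (P (N + 1))) - φ.symm (ω n)‖ ^ q
            = ‖coeff n (P (N + 1)) - ω n‖ := by
          intro N
          rw [← map_sub, ← norm_pow, ← hφ, RingEquiv.apply_symm_apply]
        simpa only [heq] using hx
      have hR : Tendsto (fun N => φ.symm (coeff n (P (N + 1)))) atTop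
          (nhds ((if n = 0 then 0 else ω (n - 1)) - θ * ω n)) := by
        have heq2 : ∀ N, φ.symm (coeff n (P (N + 1)))
            = (if n = 0 then 0 else coeff (n - 1) (P N)) - θ * coeff n (P N) := by
          intro N
          have h3 := PowerSeries.coeff_map (f := (φ.symm : F →+* F)) n (P (N + 1))
          rw [hmapP N, hXcoeff] at h3
          exact h3.symm.trans rfl ▸ h3 ▸ rfl
        simp only [heq2]
        refine Tendsto.sub ?_ ((hω n).const_mul θ)
        rcases eq_or_ne n 0 with h | h
        · simp only [h, if_true, reduceIte]
          exact tendsto_const_nhds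
        · simp only [h, if_false, reduceIte]
          exact hω (n - 1)
      exact tendsto_nhds_unique hL hR
    ext n
    rw [PowerSeries.coeff_map, PowerSeries.coeff_mk, hXcoeff]
    rw [show (φ.symm : F →+* F) (ω n) = φ.symm (ω n) from rfl, hfe n]
    simp [PowerSeries.coeff_mk]
  · -- coefficientwise convergence of partial products
    intro n
    simpa only [PowerSeries.coeff_mk] using hω n
end

section
/- For a t-module G = (G_a^s, φ) over an A-field L of generic characteristic, there exists a unique power series Exp_G = Σ_{i≥0} α_i τ^i ∈ Mat_s(L)[[τ]] with α_0 = Id_s satisfying the functional equation Exp_G ∘ dφ(t) = φ(t) ∘ Exp_G, where dφ(t) is the constant (degree-zero in τ) term of φ(t). -/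
open Matrix Finset Polynomial

/-- Right-hand side solver for the recursion. -/
noncomputable def nextC {L : Type*} [Field L] {s : ℕ}
    (A : ℕ → Matrix (Fin s) (Fin s) L) (σ : ℕ → L → L)
    (g : ℕ → Matrix (Fin s) (Fin s) L) (n : ℕ) : Matrix (Fin s) (Fin s) L :=
  Function.invFun (fun X : Matrix (Fin s) (Fin s) L => X * (A 0).map (σ n) - A 0 * X)
    (∑ j ∈ Finset.range n, A (j + 1) * (g (n - (j + 1))).map (σ (j + 1)))

/-- Sequence of partial solutions. -/
noncomputable def seqC {L : Type*} [Field L] {s : ℕ}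
    (A : ℕ → Matrix (Fin s) (Fin s) L) (σ : ℕ → L → L) :
    ℕ → ℕ → Matrix (Fin s) (Fin s) L
  | 0 => fun _ => 1
  | (n + 1) => fun k =>
      if k = n + 1 then nextC A σ (seqC A σ n) (n + 1) else seqC A σ n k

theorem seqC_stable {L : Type*} [Field L] {s : ℕ}
    (A : ℕ → Matrix (Fin s) (Fin s) L) (σ : ℕ → L → L) :
    ∀ n k, k ≤ n → seqC A σ n k = seqC A σ k k := by
  intro n
  induction n with
  | zero => intro k hk; interval_cases k; rfl
  | succ n ih =>
    intro k hk
    rcases eq_or_lt_of_le hk with h | h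
    · subst h; rfl
    · have hk' : k ≤ n := by omega
      show (if k = n + 1 then _ else seqC A σ n k) = _
      rw [if_neg (by omega), ih k hk']

/-- For a `t`-module `G = (𝔾_a^s, φ)` over an `A`-field `L` of generic characteristic
(`θ` transcendental over `𝔽_q ⊆ L`), with `φ(t) = A₀ + A₁τ + ⋯ + A_m τ^m` and
`A₀ = dφ(t) = θ·Id_s + N`, `N` nilpotent, there is a unique twisted power series
`Exp_G = Σ_{i≥0} αᵢ τⁱ ∈ Mat_s(L)[[τ]]` with `α₀ = Id` satisfying
`Exp_G ∘ dφ(t) = φ(t) ∘ Exp_G`.  Comparing `τⁿ`-coefficients, the functional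
equation reads `αₙ · A₀^{(n)} = Σ_{j≤n} A_j · α_{n−j}^{(j)}`, where `B^{(j)}` is the
entrywise `q^j`-power twist. -/
theorem stmt4 {Fq L : Type*} [Field Fq] [Fintype Fq] [Field L] [Algebra Fq L]
    (θ : L) (hθ : Transcendental Fq θ)
    (s : ℕ) (hs : 0 < s)
    (A : ℕ → Matrix (Fin s) (Fin s) L) (m : ℕ) (hfin : ∀ j, m < j → A j = 0)
    (N : Matrix (Fin s) (Fin s) L) (hnil : IsNilpotent N)
    (hA0 : A 0 = θ • (1 : Matrix (Fin s) (Fin s) L) + N) :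
    ∃! α : ℕ → Matrix (Fin s) (Fin s) L,
      α 0 = 1 ∧
      ∀ n, α n * (A 0).map (fun x => x ^ (Fintype.card Fq) ^ n) =
        ∑ j ∈ Finset.range (n + 1),
          A j * (α (n - j)).map (fun x => x ^ (Fintype.card Fq) ^ j) := by
  classical
  set q := Fintype.card Fq with hqdef
  set σ : ℕ → L → L := fun j x => x ^ q ^ j with hσdef
  -- characteristic bookkeeping
  obtain ⟨p, hcp⟩ := CharP.exists Fq
  haveI : CharP Fq p := hcp
  obtain ⟨f, hp, hcard⟩ := FiniteField.card Fq p
  haveI : Fact p.Prime := ⟨hp⟩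
  haveI : CharP L p := charP_of_injective_algebraMap (algebraMap Fq L).injective p
  have hq2 : 1 < q := Fintype.one_lt_card
  -- σ n is a ring hom
  have hσhom : ∀ n, σ n = ⇑(iterateFrobenius L p ((f : ℕ) * n)) := by
    intro n
    funext x
    have h1 : σ n x = x ^ q ^ n := rfl
    rw [h1, iterateFrobenius_def, hqdef, hcard, ← pow_mul]
  have hσ0 : ∀ M : Matrix (Fin s) (Fin s) L, M.map (σ 0) = M := by
    intro M; ext i j; simp [hσdef]
  -- the twisted matrix A₀ ^(n)
  have hmap : ∀ n, (A 0).map (σ n) =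
      σ n θ • (1 : Matrix (Fin s) (Fin s) L) + N.map (σ n) := by
    intro n
    rw [hσhom]
    set φ := iterateFrobenius L p ((f : ℕ) * n)
    have h0 : (A 0).map ⇑φ = φ.mapMatrix (A 0) := rfl
    have h1 : (θ • (1 : Matrix (Fin s) (Fin s) L)).map ⇑φ
        = φ θ • (1 : Matrix (Fin s) (Fin s) L) := by
      rw [Matrix.smul_one_eq_diagonal, Matrix.diagonal_map (map_zero φ),
        Matrix.smul_one_eq_diagonal]
    rw [h0, hA0, map_add, RingHom.mapMatrix_apply, RingHom.mapMatrix_apply, h1]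
  -- θ^{q^n} ≠ θ for n ≥ 1
  have hne : ∀ n, 0 < n → σ n θ - θ ≠ 0 := by
    intro n hn h
    apply hθ
    have hqn : ¬ (1 = q ^ n) := by
      have : q ^ 1 ≤ q ^ n := Nat.pow_le_pow_right (by omega) hn
      simp at this; omega
    refine ⟨(Polynomial.X : Polynomial Fq) ^ (q ^ n) - Polynomial.X, ?_, ?_⟩
    · intro h0
      have hcoeff : ((Polynomial.X : Polynomial Fq) ^ (q ^ n) - Polynomial.X).coeff (q ^ n)
          = 1 := by
        rw [Polynomial.coeff_sub, Polynomial.coeff_X_pow, Polynomial.coeff_X,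
          if_pos rfl, if_neg hqn, sub_zero]
      rw [h0, Polynomial.coeff_zero] at hcoeff
      exact one_ne_zero hcoeff.symm
    · simp only [map_sub, map_pow, Polynomial.aeval_X]
      have hσθ : σ n θ = θ ^ q ^ n := rfl
      rw [← hσθ]
      rw [sub_eq_zero] at h
      rw [h, sub_self]
  -- nilpotency of twisted N
  have hnil' : ∀ n, IsNilpotent (N.map (σ n)) := by
    intro n
    obtain ⟨k, hk⟩ := hnil
    refine ⟨k, ?_⟩
    rw [hσhom]
    have : N.map ⇑(iterateFrobenius L p ((f : ℕ) * n)) =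
        (iterateFrobenius L p ((f : ℕ) * n)).mapMatrix N := rfl
    rw [this, ← map_pow, hk, map_zero]
  -- bijectivity of the Sylvester operator
  have hT : ∀ n, 0 < n → Function.Bijective
      (fun X : Matrix (Fin s) (Fin s) L => X * (A 0).map (σ n) - A 0 * X) := by
    intro n hn
    set M' := (A 0).map (σ n) with hM'
    set c : L := σ n θ - θ with hc
    set D : Module.End L (Matrix (Fin s) (Fin s) L) :=
      LinearMap.mulRight L (N.map (σ n)) - LinearMap.mulLeft L N with hD
    set T : Module.End L (Matrix (Fin s) (Fin s) L) :=
      c • (1 : Module.End L (Matrix (Fin s) (Fin s) L)) + D with hTdef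
    have hfun : (fun X : Matrix (Fin s) (Fin s) L => X * M' - A 0 * X) = ⇑T := by
      funext X
      simp only [hTdef, hD, LinearMap.add_apply, LinearMap.sub_apply,
        LinearMap.smul_apply, Module.End.one_apply, LinearMap.mulRight_apply,
        LinearMap.mulLeft_apply]
      rw [hM', hmap n, hA0, hc]
      rw [mul_add, add_mul, sub_smul]
      have h1 : X * (σ n θ • (1 : Matrix (Fin s) (Fin s) L)) = σ n θ • X := by
        rw [mul_smul_comm, mul_one]
      have h2 : (θ • (1 : Matrix (Fin s) (Fin s) L)) * X = θ • X := by
        rw [smul_mul_assoc, one_mul]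
      rw [h1, h2]
      abel
    rw [hfun, ← Module.End.isUnit_iff]
    have hDnil : IsNilpotent D := by
      have hcomm : Commute (LinearMap.mulLeft L N)
          (LinearMap.mulRight L (N.map (σ n))) := LinearMap.commute_mulLeft_right N _
      have h1 : IsNilpotent (LinearMap.mulRight L (N.map (σ n))) := by
        obtain ⟨k, hk⟩ := hnil' n
        exact ⟨k, by rw [LinearMap.pow_mulRight, hk, LinearMap.mulRight_zero_eq_zero]⟩
      have h2 : IsNilpotent (LinearMap.mulLeft L N) := by
        obtain ⟨k, hk⟩ := hnil
        exact ⟨k, by rw [LinearMap.pow_mulLeft, hk, LinearMap.mulLeft_zero_eq_zero]⟩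
      exact Commute.isNilpotent_sub hcomm.symm h1 h2
    have hcu : IsUnit (c • (1 : Module.End L (Matrix (Fin s) (Fin s) L))) := by
      rw [← Algebra.algebraMap_eq_smul_one]
      exact (isUnit_iff_ne_zero.mpr (hne n hn)).map (algebraMap L _)
    refine hDnil.isUnit_add_left_of_commute hcu ?_
    exact (Commute.one_right D).smul_right c
  -- the candidate solution
  set α : ℕ → Matrix (Fin s) (Fin s) L := fun n => seqC A σ n n with hα
  have hα0 : α 0 = 1 := rfl
  have hαstep : ∀ n, α (n + 1) * (A 0).map (σ (n + 1)) - A 0 * α (n + 1) =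
      ∑ j ∈ Finset.range (n + 1), A (j + 1) * (α (n - j)).map (σ (j + 1)) := by
    intro n
    have h1 : α (n + 1) = nextC A σ (seqC A σ n) (n + 1) := by
      show seqC A σ (n + 1) (n + 1) = _
      simp [seqC]
    have hsum : (∑ j ∈ Finset.range (n + 1),
        A (j + 1) * (seqC A σ n ((n + 1) - (j + 1))).map (σ (j + 1))) =
        ∑ j ∈ Finset.range (n + 1), A (j + 1) * (α (n - j)).map (σ (j + 1)) := by
      refine Finset.sum_congr rfl fun j hj => ?_
      rw [Finset.mem_range] at hj
      have h2 : (n + 1) - (j + 1) = n - j := by omega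
      rw [h2, seqC_stable A σ n (n - j) (by omega)]
    rw [h1, nextC, ← hsum]
    have hsurj := (hT (n + 1) (Nat.succ_pos n)).2
    have := Function.invFun_eq (f := fun X : Matrix (Fin s) (Fin s) L =>
      X * (A 0).map (σ (n + 1)) - A 0 * X)
      (hsurj (∑ j ∈ Finset.range (n + 1),
        A (j + 1) * (seqC A σ n ((n + 1) - (j + 1))).map (σ (j + 1))))
    exact this
  have hαeq : ∀ n, α n * (A 0).map (σ n) =
      ∑ j ∈ Finset.range (n + 1), A j * (α (n - j)).map (σ j) := by
    intro n
    cases n with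
    | zero =>
      simp [Finset.sum_range_one, hσ0, hα0]
    | succ n =>
      rw [Finset.sum_range_succ']
      have h0 : A 0 * (α (n + 1 - 0)).map (σ 0) = A 0 * α (n + 1) := by
        rw [Nat.sub_zero, hσ0]
      rw [h0]
      have := hαstep n
      have h3 : ∀ j, n + 1 - (j + 1) = n - j := fun j => by omega
      calc α (n + 1) * (A 0).map (σ (n + 1))
          = (α (n + 1) * (A 0).map (σ (n + 1)) - A 0 * α (n + 1)) + A 0 * α (n + 1) := by
            abel
        _ = (∑ j ∈ Finset.range (n + 1), A (j + 1) * (α (n + 1 - (j + 1))).map (σ (j + 1)))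
              + A 0 * α (n + 1) := by
            rw [this]
            congr 1
            exact Finset.sum_congr rfl fun j _ => by rw [h3 j]
  refine ⟨α, ⟨hα0, hαeq⟩, ?_⟩
  rintro β ⟨hβ0, hβeq⟩
  funext n
  induction n using Nat.strong_induction_on with
  | _ n ih =>
    cases n with
    | zero => rw [hβ0, hα0]
    | succ n =>
      have hβstep : β (n + 1) * (A 0).map (σ (n + 1)) - A 0 * β (n + 1) =
          ∑ j ∈ Finset.range (n + 1), A (j + 1) * (β (n - j)).map (σ (j + 1)) := by
        have := hβeq (n + 1)
        rw [Finset.sum_range_succ'] at this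
        have h0 : A 0 * (β (n + 1 - 0)).map (σ 0) = A 0 * β (n + 1) := by
          rw [Nat.sub_zero, hσ0]
        rw [h0] at this
        have h3 : ∀ j, n + 1 - (j + 1) = n - j := fun j => by omega
        rw [sub_eq_iff_eq_add]
        rw [this]
        congr 1
        exact Finset.sum_congr rfl fun j _ => by rw [h3 j]
      have hkey : β (n + 1) * (A 0).map (σ (n + 1)) - A 0 * β (n + 1) =
          α (n + 1) * (A 0).map (σ (n + 1)) - A 0 * α (n + 1) := by
        rw [hβstep, hαstep]
        exact Finset.sum_congr rfl fun j hj => by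
          rw [Finset.mem_range] at hj
          rw [ih (n - j) (by omega)]
      exact (hT (n + 1) (Nat.succ_pos n)).1 hkey
end

section
/- The functor G ↦ H_G from the category of A-finite t-modules of dimension d over K̄ to the category of A-finite dual t-motives of rank d over K̄[σ] is fully faithful: every left K̄[t,σ]-module homomorphism H_G → H_{G'} equals ε_P for a unique morphism P: G → G' of t-modules (P ∈ Mat_{d'×d}(K̄[τ]) with Pφ(t) = φ'(t)P), where ε_P(h) = hP^*. -/
/-- Twisted (`τ`-side) convolution of matrix coefficient sequences: the product in
matrices over `K̄[τ]` (`τ c = c^q τ`, i.e. twist by `φ`). -/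
noncomputable def tConv {L : Type*} [Field L] (φ : L → L) {a b c : ℕ}
    (B : ℕ → Matrix (Fin a) (Fin b) L) (C : ℕ → Matrix (Fin b) (Fin c) L) :
    ℕ → Matrix (Fin a) (Fin c) L :=
  fun n => ∑ i ∈ Finset.range (n + 1), B i * (C (n - i)).map (φ^[i])

/-- Twisted (`σ`-side) convolution: the product in matrices over `K̄[σ]`
(`σ c = c^{(−1)} σ`, i.e. twist by `φ⁻¹`). -/
noncomputable def sConv {L : Type*} [Field L] (φinv : L → L) {a b c : ℕ}
    (B : ℕ → Matrix (Fin a) (Fin b) L) (C : ℕ → Matrix (Fin b) (Fin c) L) :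
    ℕ → Matrix (Fin a) (Fin c) L :=
  fun n => ∑ i ∈ Finset.range (n + 1), B i * (C (n - i)).map (φinv^[i])

/-- The anti-isomorphism `* : Mat_{a×b}(K̄[τ]) → Mat_{b×a}(K̄[σ])`,
`(Σ aᵢτⁱ)^* = Σ aᵢ^{(−i)}σⁱ` extended by transposition. -/
noncomputable def starOf {L : Type*} [Field L] (φinv : L → L) {a b : ℕ}
    (P : ℕ → Matrix (Fin a) (Fin b) L) : ℕ → Matrix (Fin b) (Fin a) L :=
  fun k => ((P k).map (φinv^[k])).transpose

/-- Finitely supported coefficient sequences (genuine twisted polynomials). -/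
def FinSuppSeq {M : Type*} [Zero M] (h : ℕ → M) : Prop := ∃ n, ∀ k, n < k → h k = 0

/-- Left multiplication by `σ` on `H_G = Mat_{1×d}(K̄[σ])`. -/
noncomputable def sigmaShift {L : Type*} [Field L] (φinv : L → L) {d : ℕ}
    (h : ℕ → Matrix (Fin 1) (Fin d) L) : ℕ → Matrix (Fin 1) (Fin d) L :=
  fun k => if k = 0 then 0 else (h (k - 1)).map φinv

section Aux
variable {L : Type*} [Field L] {a b c : ℕ}

lemma sConv_add_left (g : L → L) (B B' : ℕ → Matrix (Fin a) (Fin b) L)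
    (C : ℕ → Matrix (Fin b) (Fin c) L) :
    sConv g (B + B') C = sConv g B C + sConv g B' C := by
  funext n
  simp only [sConv, Pi.add_apply]
  rw [← Finset.sum_add_distrib]
  exact Finset.sum_congr rfl fun i _ => Matrix.add_mul _ _ _

lemma sConv_smul_left (g : L → L) (x : L) (B : ℕ → Matrix (Fin a) (Fin b) L)
    (C : ℕ → Matrix (Fin b) (Fin c) L) :
    sConv g (fun k => x • B k) C = fun n => x • sConv g B C n := by
  funext n
  simp [sConv, Matrix.smul_mul, Finset.smul_sum]

lemma sConv_zero_left (g : L → L) (C : ℕ → Matrix (Fin b) (Fin c) L) :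
    sConv g (0 : ℕ → Matrix (Fin a) (Fin b) L) C = 0 := by
  funext n; simp [sConv]

lemma sConv_rowmul (g : L → L) (E : Matrix (Fin a) (Fin b) L)
    (S : ℕ → Matrix (Fin b) (Fin c) L) {e : ℕ} (D : ℕ → Matrix (Fin c) (Fin e) L) :
    sConv g (fun n => E * S n) D = fun n => E * sConv g S D n := by
  funext n
  simp only [sConv]
  rw [Matrix.mul_sum]
  exact Finset.sum_congr rfl fun i _ => Matrix.mul_assoc _ _ _

lemma mat_map_mul (g : L ≃+* L) (M : Matrix (Fin a) (Fin b) L) (N : Matrix (Fin b) (Fin c) L) :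
    (M * N).map ⇑g = M.map ⇑g * N.map ⇑g := by
  ext i j; simp [Matrix.mul_apply, Matrix.map_apply, map_sum, map_mul]

lemma map_sum_mat {ι : Type*} (s : Finset ι) (g : L ≃+* L)
    (M : ι → Matrix (Fin a) (Fin b) L) :
    (∑ i ∈ s, M i).map ⇑g = ∑ i ∈ s, (M i).map ⇑g := by
  ext i j
  simp [Matrix.map_apply, Matrix.sum_apply, map_sum]

lemma sConv_sigmaShift (g : L ≃+* L) {d : ℕ} (B : ℕ → Matrix (Fin 1) (Fin d) L)
    (C : ℕ → Matrix (Fin d) (Fin c) L) :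
    sConv (⇑g) (sigmaShift (⇑g) B) C = sigmaShift (⇑g) (sConv (⇑g) B C) := by
  funext n
  cases n with
  | zero => simp [sConv, sigmaShift]
  | succ m =>
    have step : sConv (⇑g) (sigmaShift (⇑g) B) C (m+1)
        = ∑ i ∈ Finset.range (m+1),
            ((B i) * (C (m - i)).map ((⇑g)^[i])).map ⇑g := by
      rw [sConv, Finset.sum_range_succ']
      have h0 : sigmaShift (⇑g) B 0 = 0 := by simp [sigmaShift]
      rw [h0, Matrix.zero_mul, add_zero]
      refine Finset.sum_congr rfl fun i _ => ?_
      have h1 : sigmaShift (⇑g) B (i+1) = (B i).map ⇑g := by simp [sigmaShift]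
      rw [h1, Nat.succ_sub_succ,
        show ((⇑g)^[i+1] : L → L) = ⇑g ∘ (⇑g)^[i] from Function.iterate_succ' _ _,
        ← Matrix.map_map, mat_map_mul]
    rw [step, ← map_sum_mat _ g]
    simp [sigmaShift, sConv]

noncomputable def iterEquiv {L : Type*} [Field L] (g : L ≃+* L) : ℕ → (L ≃+* L)
  | 0 => RingEquiv.refl L
  | (k+1) => (iterEquiv g k).trans g

lemma iterEquiv_coe (g : L ≃+* L) (k : ℕ) : ⇑(iterEquiv g k) = (⇑g)^[k] := by
  induction k with
  | zero => rfl
  | succ m ih =>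
    funext x
    rw [Function.iterate_succ_apply']
    show g (iterEquiv g m x) = _
    rw [ih]

lemma iter_cancel (g : L ≃+* L) (k : ℕ) (x : L) : (⇑g)^[k] ((⇑g.symm)^[k] x) = x :=
  Function.LeftInverse.iterate g.apply_symm_apply k x

lemma iter_cancel' (g : L ≃+* L) (k : ℕ) (x : L) : (⇑g.symm)^[k] ((⇑g)^[k] x) = x :=
  Function.LeftInverse.iterate g.symm_apply_apply k x

lemma iter_comp1 (g : L ≃+* L) {i n : ℕ} (h : i ≤ n) (x : L) :
    (⇑g)^[n] ((⇑g.symm)^[i] x) = (⇑g)^[n - i] x := by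
  conv_lhs => rw [← Nat.sub_add_cancel h, Function.iterate_add_apply]
  rw [iter_cancel]

lemma iter_zero_eq (g : L ≃+* L) (n : ℕ) : (⇑g)^[n] (0 : L) = 0 :=
  Function.iterate_fixed (map_zero g) n

lemma tConv_eq_star (g : L ≃+* L) (B : ℕ → Matrix (Fin a) (Fin b) L)
    (C : ℕ → Matrix (Fin b) (Fin c) L) (n : ℕ) :
    tConv (⇑g) B C n
      = ((sConv (⇑g.symm) (starOf (⇑g.symm) C) (starOf (⇑g.symm) B) n).map
          ((⇑g)^[n])).transpose := by
  have key : ∀ i ∈ Finset.range (n+1),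
      (((starOf (⇑g.symm) C i *
          (starOf (⇑g.symm) B (n - i)).map ((⇑g.symm)^[i])).map ((⇑g)^[n]))).transpose
        = B (n - i) * (C i).map ((⇑g)^[n - i]) := by
    intro i hi
    have hin : i ≤ n := Nat.lt_succ_iff.mp (Finset.mem_range.mp hi)
    ext r s
    simp only [Matrix.transpose_apply, Matrix.map_apply, Matrix.mul_apply, starOf]
    rw [show ((⇑g)^[n]) = ⇑(iterEquiv g n) from (iterEquiv_coe g n).symm, map_sum]
    refine Finset.sum_congr rfl fun l _ => ?_
    rw [map_mul]
    have t1 : (iterEquiv g n) ((⇑g.symm)^[i] (C i l s)) = (⇑g)^[n-i] (C i l s) := by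
      rw [iterEquiv_coe]; exact iter_comp1 g hin _
    have t2 : (iterEquiv g n) ((⇑g.symm)^[i] ((⇑g.symm)^[n-i] (B (n-i) r l))) = B (n-i) r l := by
      rw [iterEquiv_coe, ← Function.iterate_add_apply, Nat.add_sub_cancel' hin, iter_cancel]
    rw [t1, t2, mul_comm]
  rw [sConv, show ((⇑g)^[n]) = ⇑(iterEquiv g n) from (iterEquiv_coe g n).symm,
    map_sum_mat, Matrix.transpose_sum]
  rw [show ⇑(iterEquiv g n) = ((⇑g)^[n]) from iterEquiv_coe g n] at *
  rw [Finset.sum_congr rfl key]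
  rw [tConv]
  have := Finset.sum_range_reflect
    (fun j => B j * (C (n - j)).map ((⇑g)^[j])) (n+1)
  rw [← this]
  refine Finset.sum_congr rfl fun i hi => ?_
  have hin : i ≤ n := Nat.lt_succ_iff.mp (Finset.mem_range.mp hi)
  have h1 : n + 1 - 1 - i = n - i := by omega
  have h2 : n - (n - i) = i := by omega
  rw [h1, h2]

/-- standard basis row sequences -/
noncomputable def eSeq {L : Type*} [Field L] (d : ℕ) (j : Fin d) :
    ℕ → Matrix (Fin 1) (Fin d) L :=
  fun k => if k = 0 then Matrix.single 0 j 1 else 0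

lemma eSeq_fs (d : ℕ) (j : Fin d) : FinSuppSeq (eSeq (L := L) d j) :=
  ⟨0, fun k hk => by simp [eSeq, hk.ne']⟩

lemma rowE_mul {d c : ℕ} (j : Fin d) (M : Matrix (Fin d) (Fin c) L) (i : Fin 1) (s : Fin c) :
    (Matrix.single (0 : Fin 1) j (1 : L) * M) i s = M j s := by
  have hi : i = 0 := Subsingleton.elim _ _
  subst hi
  simp [Matrix.mul_apply, Matrix.single]

lemma sConv_eSeq (g : L → L) {d c : ℕ} (j : Fin d) (C : ℕ → Matrix (Fin d) (Fin c) L) :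
    sConv g (eSeq d j) C = fun n => Matrix.single (0 : Fin 1) j (1 : L) * C n := by
  funext n
  rw [sConv, Finset.sum_eq_single 0]
  · simp [eSeq]
  · intro i _ hi; simp [eSeq, hi, Matrix.zero_mul]
  · intro hmem; exact absurd (Finset.mem_range.mpr (Nat.succ_pos n)) hmem

lemma repr0 {d : ℕ} (h : ℕ → Matrix (Fin 1) (Fin d) L) (hh : ∀ k, 0 < k → h k = 0) :
    h = fun k => ∑ j : Fin d, h 0 0 j • eSeq d j k := by
  funext k
  rcases Nat.eq_zero_or_pos k with rfl | hk
  · ext i s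
    have hi : i = 0 := Subsingleton.elim _ _
    subst hi
    simp [eSeq, Matrix.sum_apply, Matrix.single, mul_ite]
  · simp [hh k hk, eSeq, hk.ne']

lemma fs_sigma (g : L ≃+* L) {d : ℕ} {h : ℕ → Matrix (Fin 1) (Fin d) L}
    (hfs : FinSuppSeq h) : FinSuppSeq (sigmaShift (⇑g) h) := by
  obtain ⟨n, hn⟩ := hfs
  refine ⟨n + 1, fun k hk => ?_⟩
  have hk0 : k ≠ 0 := by omega
  have hz : h (k - 1) = 0 := hn _ (by omega)
  simp [sigmaShift, hk0, hz]

lemma fs_smul_eSeq {d : ℕ} (c : L) (j : Fin d) :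
    FinSuppSeq (fun k => c • eSeq (L := L) d j k) :=
  ⟨0, fun k hk => by simp [eSeq, hk.ne']⟩

lemma fs_sum_smul {d : ℕ} (s : Finset (Fin d)) (c : Fin d → L) :
    FinSuppSeq (fun k => ∑ j ∈ s, c j • eSeq (L := L) d j k) :=
  ⟨0, fun k hk => by simp [eSeq, hk.ne']⟩

lemma starOf_zero_of (g : L ≃+* L) {A : ℕ → Matrix (Fin a) (Fin b) L} {n : ℕ}
    (hAn : A n = 0) : starOf (⇑g) A n = 0 := by
  ext i s
  simp [starOf, hAn, iter_zero_eq]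

end Aux

/-- The functor `G ↦ H_G` (where `H_G = Mat_{1×d}(K̄[σ])` with `t`-action
`t·h = h·φ(t)^*`) from `A`-finite `t`-modules over `K̄` to `A`-finite dual
`t`-motives is fully faithful: every left `K̄[t,σ]`-module homomorphism
`f : H_G → H_{G'}` (additive, `K̄`-linear, `σ`- and `t`-equivariant, preserving
finite support) equals `ε_P : h ↦ h·P^*` for a unique morphism of `t`-modules
`P ∈ Mat_{d'×d}(K̄[τ])` with `P·φ(t) = φ'(t)·P`.  Here `φ(t)`, `φ'(t)` are given by
their `τ`-coefficients `A`, `A'`. -/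
theorem stmt11 {L : Type*} [Field L] (q : ℕ) (hq : 1 < q)
    (φ : L ≃+* L) (hφ : ∀ x : L, φ x = x ^ q)
    (d d' : ℕ)
    (A : ℕ → Matrix (Fin d) (Fin d) L) (kA : ℕ) (hA : ∀ j, kA < j → A j = 0)
    (A' : ℕ → Matrix (Fin d') (Fin d') L) (kA' : ℕ) (hA' : ∀ j, kA' < j → A' j = 0)
    (f : (ℕ → Matrix (Fin 1) (Fin d) L) → ℕ → Matrix (Fin 1) (Fin d') L)
    (hadd : ∀ g h, FinSuppSeq g → FinSuppSeq h → f (g + h) = f g + f h)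
    (hscal : ∀ (c : L) h, FinSuppSeq h →
        f (fun k => c • h k) = fun k => c • f h k)
    (hsigma : ∀ h, FinSuppSeq h →
        f (sigmaShift (⇑φ.symm) h) = sigmaShift (⇑φ.symm) (f h))
    (ht : ∀ h, FinSuppSeq h →
        f (sConv (⇑φ.symm) h (starOf (⇑φ.symm) A)) =
          sConv (⇑φ.symm) (f h) (starOf (⇑φ.symm) A'))
    (hfin : ∀ h, FinSuppSeq h → FinSuppSeq (f h)) :
    ∃! P : ℕ → Matrix (Fin d') (Fin d) L,
      FinSuppSeq P ∧
      tConv (⇑φ) P A = tConv (⇑φ) A' P ∧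
      ∀ h, FinSuppSeq h → f h = sConv (⇑φ.symm) h (starOf (⇑φ.symm) P) := by
  classical
  set P : ℕ → Matrix (Fin d') (Fin d) L :=
    fun n => Matrix.of fun i' j => (⇑φ)^[n] (f (eSeq d j) n 0 i') with hP
  set S : ℕ → Matrix (Fin d) (Fin d') L := starOf (⇑φ.symm) P with hS
  have hSe : ∀ n (j : Fin d) (i' : Fin d'), S n j i' = f (eSeq d j) n 0 i' := by
    intro n j i'
    simp [hS, hP, starOf, Matrix.map_apply, iter_cancel' φ n]
  have hbasis : ∀ j : Fin d,
      f (eSeq d j) = fun n => Matrix.single (0 : Fin 1) j (1 : L) * S n := by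
    intro j
    funext n
    ext i s
    have hi : i = 0 := Subsingleton.elim _ _
    subst hi
    rw [rowE_mul, hSe]
  have hf0 : f 0 = 0 := by
    have h00 := hadd 0 0 ⟨0, fun _ _ => rfl⟩ ⟨0, fun _ _ => rfl⟩
    rw [add_zero] at h00
    exact (left_eq_add.mp h00)
  have hsingle : ∀ (cc : L) (j : Fin d),
      f (fun k => cc • eSeq d j k) = sConv (⇑φ.symm) (fun k => cc • eSeq d j k) S := by
    intro cc j
    rw [hscal cc (eSeq d j) (eSeq_fs d j), sConv_smul_left, hbasis j, sConv_eSeq]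
  have base : ∀ (h : ℕ → Matrix (Fin 1) (Fin d) L), (∀ k, 0 < k → h k = 0) →
      f h = sConv (⇑φ.symm) h S := by
    intro h hh
    rw [repr0 h hh]
    have main : ∀ s : Finset (Fin d), ∀ c : Fin d → L,
        f (fun k => ∑ j ∈ s, c j • eSeq d j k)
          = sConv (⇑φ.symm) (fun k => ∑ j ∈ s, c j • eSeq d j k) S := by
      intro s
      induction s using Finset.induction_on with
      | empty =>
        intro c
        have h0 : (fun k => ∑ j ∈ (∅ : Finset (Fin d)), c j • eSeq (L := L) d j k)
            = 0 := by funext k; simp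
        rw [h0, hf0, sConv_zero_left]
      | @insert a s hj ih =>
        intro c
        have hsplit : (fun k => ∑ j ∈ insert a s, c j • eSeq (L := L) d j k)
            = (fun k => c a • eSeq d a k) + fun k => ∑ j ∈ s, c j • eSeq d j k := by
          funext k; simp [Finset.sum_insert hj]
        rw [hsplit, hadd _ _ (fs_smul_eSeq (c a) a) (fs_sum_smul s c),
          sConv_add_left, hsingle (c a) a, ih c]
    exact main Finset.univ fun j => h 0 0 j
  have key : ∀ n, ∀ h : ℕ → Matrix (Fin 1) (Fin d) L, (∀ k, n < k → h k = 0) →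
      f h = sConv (⇑φ.symm) h S := by
    intro n
    induction n with
    | zero => exact base
    | succ m ih =>
      intro h hh
      set h0 : ℕ → Matrix (Fin 1) (Fin d) L := fun k => if k = 0 then h 0 else 0 with hh0
      set h1 : ℕ → Matrix (Fin 1) (Fin d) L := fun k => (h (k+1)).map ⇑φ with hh1
      have hdec : h = h0 + sigmaShift (⇑φ.symm) h1 := by
        funext k
        cases k with
        | zero => simp [hh0, sigmaShift]
        | succ l =>
          have e1 : sigmaShift (⇑φ.symm) h1 (l+1) = (h1 l).map ⇑φ.symm := by
            simp [sigmaShift]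
          have e2 : h0 (l+1) = 0 := by simp [hh0]
          rw [Pi.add_apply, e1, e2, zero_add, hh1]
          ext i s
          simp [Matrix.map_apply]
      have hbound1 : ∀ k, m < k → h1 k = 0 := by
        intro k hk
        have : h (k+1) = 0 := hh (k+1) (by omega)
        simp [hh1, this]
      have fs_h1 : FinSuppSeq h1 := ⟨m, hbound1⟩
      have fs_h0 : FinSuppSeq h0 := ⟨0, fun k hk => by simp [hh0, hk.ne']⟩
      have hbound0 : ∀ k, 0 < k → h0 k = 0 := fun k hk => by simp [hh0, hk.ne']
      rw [hdec, hadd _ _ fs_h0 (fs_sigma φ.symm fs_h1), hsigma h1 fs_h1,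
        ih h1 hbound1, base h0 hbound0, sConv_add_left, sConv_sigmaShift φ.symm h1 S]
  have hPfs : FinSuppSeq P := by
    choose N hN using fun j : Fin d => hfin (eSeq d j) (eSeq_fs d j)
    refine ⟨Finset.univ.sup N, fun k hk => ?_⟩
    ext i' j
    have h4 : f (eSeq d j) k = 0 :=
      hN j k (lt_of_le_of_lt (Finset.le_sup (Finset.mem_univ j)) hk)
    have h5 : P k i' j = (⇑φ)^[k] (f (eSeq d j) k 0 i') := rfl
    rw [h5, h4]
    simp [iter_zero_eq]
  have hrep : ∀ h, FinSuppSeq h → f h = sConv (⇑φ.symm) h S := by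
    rintro h ⟨n, hn⟩
    exact key n h hn
  have hcomm : sConv (⇑φ.symm) (starOf (⇑φ.symm) A) S
      = sConv (⇑φ.symm) S (starOf (⇑φ.symm) A') := by
    funext n
    ext j i'
    have ht' := ht (eSeq d j) (eSeq_fs d j)
    rw [sConv_eSeq, hbasis j] at ht'
    have hbA : ∀ k, kA < k →
        (Matrix.single (0 : Fin 1) j (1 : L) * starOf (⇑φ.symm) A k) = 0 := by
      intro k hk
      rw [starOf_zero_of φ.symm (hA k hk), Matrix.mul_zero]
    rw [key kA _ hbA] at ht'
    rw [sConv_rowmul, sConv_rowmul] at ht'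
    calc sConv (⇑φ.symm) (starOf (⇑φ.symm) A) S n j i'
        = (Matrix.single (0 : Fin 1) j (1 : L)
            * sConv (⇑φ.symm) (starOf (⇑φ.symm) A) S n) 0 i' := (rowE_mul _ _ _ _).symm
      _ = (Matrix.single (0 : Fin 1) j (1 : L)
            * sConv (⇑φ.symm) S (starOf (⇑φ.symm) A') n) 0 i' := by
            rw [congrFun ht' n]
      _ = sConv (⇑φ.symm) S (starOf (⇑φ.symm) A') n j i' := rowE_mul _ _ _ _
  have hc2 : tConv (⇑φ) P A = tConv (⇑φ) A' P := by
    funext n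
    rw [tConv_eq_star φ P A n, tConv_eq_star φ A' P n, ← hS, hcomm]
  refine ⟨P, ⟨hPfs, hc2, by rw [← hS]; exact hrep⟩, ?_⟩
  rintro Q ⟨hQfs, hQc, hQrep⟩
  funext n
  ext i' j
  have h1 := hQrep (eSeq d j) (eSeq_fs d j)
  rw [sConv_eSeq] at h1
  have h2 : f (eSeq d j) n 0 i' = (⇑φ.symm)^[n] (Q n i' j) := by
    simp only [h1]
    rw [rowE_mul]
    simp [starOf, Matrix.map_apply]
  have h3 : P n i' j = (⇑φ)^[n] (f (eSeq d j) n 0 i') := rfl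
  rw [h3, h2, iter_cancel]
end
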